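/- For every n ≥ 2 and every i with 2 ≤ i ≤ n, the map σ_i = (x_i x̄_i)(a_1 ā_1)(a_2 ā_2)(y_i ȳ_i)⋯(y_n ȳ_n), which negates the literals of x_i, a_1, a_2, and y_i through y_n and fixes all other literals, is a symmetry of QUPARITY_n. -/
import Mathlib


/-! Generic framework for QBFs in prenex CNF. -/

inductive Q
  | ex
  | all
deriving DecidableEq

abbrev Lit (V : Type) := V × Bool
abbrev Clause (V : Type) := Finset (Lit V)
abbrev Cnf (V : Type) := Finset (Clause V)
abbrev QPrefix (V : Type) := List (Q × V)

variable {V : Type} [DecidableEq V]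

/-- Negation of a literal. -/
def negLit (l : Lit V) : Lit V := (l.1, !l.2)

/-- Evaluation of a literal under an assignment. -/
def evalLit (τ : V → Bool) (l : Lit V) : Bool := if l.2 then τ l.1 else !(τ l.1)

/-- An assignment satisfies a clause if some literal evaluates to true. -/
def SatClause (τ : V → Bool) (C : Clause V) : Prop := ∃ l ∈ C, evalLit τ l = true

/-- An assignment satisfies a CNF if it satisfies all clauses. -/
def SatCnf (τ : V → Bool) (φ : Cnf V) : Prop := ∀ C ∈ φ, SatClause τ C

/-- Recursive semantics of a quantifier prefix over a matrix predicate. -/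
def QTrue : QPrefix V → (V → Bool) → ((V → Bool) → Prop) → Prop
  | [], τ, M => M τ
  | (Q.ex, v) :: P, τ, M => ∃ b, QTrue P (Function.update τ v b) M
  | (Q.all, v) :: P, τ, M => ∀ b, QTrue P (Function.update τ v b) M

/-- Truth of a prenex CNF QBF (closed; the default assignment is irrelevant). -/
def QBFTrue (P : QPrefix V) (φ : Cnf V) : Prop :=
  QTrue P (fun _ => false) (fun τ => SatCnf τ φ)

/-- Two variables are in the same quantifier block of a prefix. -/
def SameBlock (P : QPrefix V) (v w : V) : Prop :=
  ∃ i j : ℕ, (∃ q : Q, P[i]? = some (q, v)) ∧ (∃ q : Q, P[j]? = some (q, w)) ∧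
    ∀ (k₁ k₂ : ℕ) (e₁ e₂ : Q × V), min i j ≤ k₁ → k₁ ≤ k₂ → k₂ ≤ max i j →
      P[k₁]? = some e₁ → P[k₂]? = some e₂ → e₁.1 = e₂.1

/-- An admissible literal map for a prefix: a bijection on literals commuting with
negation and moving variables only within their quantifier block. -/
structure Admissible (P : QPrefix V) (σ : Lit V → Lit V) : Prop where
  bij : Function.Bijective σ
  neg : ∀ l, σ (negLit l) = negLit (σ l)
  block : ∀ v w b c, σ (v, b) = (w, c) → v ≠ w → SameBlock P v w

/-- Action of a literal map on a clause. -/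
def mapClause (σ : Lit V → Lit V) (C : Clause V) : Clause V := C.image σ

/-- A (syntactic) symmetry of a QBF: an admissible map sending the clause set to itself. -/
def IsSymmetry (P : QPrefix V) (φ : Cnf V) (σ : Lit V → Lit V) : Prop :=
  Admissible P σ ∧ φ.image (mapClause σ) = φ

def IsExist (P : QPrefix V) (v : V) : Prop := (Q.ex, v) ∈ P
def IsUniv (P : QPrefix V) (v : V) : Prop := (Q.all, v) ∈ P

/-- A clause is a tautology if it contains complementary literals. -/
def Tauto (C : Clause V) : Prop := ∃ l ∈ C, negLit l ∈ C

/-- Rule R of Q-Res: resolution over an existential variable, with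
non-tautological resolvent. -/
def ResStep (P : QPrefix V) (E₁ E₂ E : Clause V) : Prop :=
  ∃ x, IsExist P x ∧ (x, true) ∈ E₁ ∧ (x, false) ∈ E₂ ∧
    E = E₁.erase (x, true) ∪ E₂.erase (x, false) ∧ ¬ Tauto E

/-- Prefix order on variables: `v` occurs strictly before `w`. -/
def LtP (P : QPrefix V) (v w : V) : Prop :=
  ∃ i j : ℕ, i < j ∧ (∃ q : Q, P[i]? = some (q, v)) ∧ (∃ q : Q, P[j]? = some (q, w))

/-- Rule U of Q-Res: universal reduction. -/
def URed (P : QPrefix V) (F₁ F : Clause V) : Prop :=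
  ∃ l, IsUniv P l.1 ∧ l ∈ F₁ ∧ negLit l ∉ F₁ ∧ F = F₁.erase l ∧
    ∀ k ∈ F₁.erase l, IsExist P k.1 → LtP P k.1 l.1

/-- Derivability in Q-Res (rules A, R, U). -/
inductive Derives (P : QPrefix V) (φ : Cnf V) : Clause V → Prop
  | ax {C : Clause V} : C ∈ φ → Derives P φ C
  | res {E₁ E₂ E : Clause V} :
      Derives P φ E₁ → Derives P φ E₂ → ResStep P E₁ E₂ E → Derives P φ E
  | ured {F₁ F : Clause V} : Derives P φ F₁ → URed P F₁ F → Derives P φ F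

/-- Derivability in Q-Res+S (rules A, R, U, S). -/
inductive DerivesS (P : QPrefix V) (φ : Cnf V) : Clause V → Prop
  | ax {C : Clause V} : C ∈ φ → DerivesS P φ C
  | res {E₁ E₂ E : Clause V} :
      DerivesS P φ E₁ → DerivesS P φ E₂ → ResStep P E₁ E₂ E → DerivesS P φ E
  | ured {F₁ F : Clause V} : DerivesS P φ F₁ → URed P F₁ F → DerivesS P φ F
  | sym {C : Clause V} {σ : Lit V → Lit V} :
      DerivesS P φ C → IsSymmetry P φ σ → DerivesS P φ (mapClause σ C)

/-- A clause available at step `i` of a derivation sequence: an input clause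
(axiom rule A, not counted as a step) or an earlier line. -/
def Avail (φ : Cnf V) (D : List (Clause V)) (i : ℕ) (C : Clause V) : Prop :=
  C ∈ φ ∨ ∃ j, ∃ _ : j < i, ∃ hj : j < D.length, D[j]'hj = C

/-- Line `C` at position `i` is justified by rule R or U from available clauses. -/
def StepOK (P : QPrefix V) (φ : Cnf V) (D : List (Clause V)) (i : ℕ) (C : Clause V) : Prop :=
  (∃ E₁ E₂, Avail φ D i E₁ ∧ Avail φ D i E₂ ∧ ResStep P E₁ E₂ C) ∨
  (∃ F₁, Avail φ D i F₁ ∧ URed P F₁ C)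

/-- Line justified by rule R, U or the symmetry rule S. -/
def StepOKS (P : QPrefix V) (φ : Cnf V) (D : List (Clause V)) (i : ℕ) (C : Clause V) : Prop :=
  StepOK P φ D i C ∨
  (∃ F₁ σ, Avail φ D i F₁ ∧ IsSymmetry P φ σ ∧ C = mapClause σ F₁)

/-- A Q-Res refutation, as a sequence of R/U steps ending in the empty clause;
its length is the number of R and U applications. -/
def IsRefutation (P : QPrefix V) (φ : Cnf V) (D : List (Clause V)) : Prop :=
  (∀ i (hi : i < D.length), StepOK P φ D i (D[i]'hi)) ∧ D.getLast? = some (∅ : Clause V)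

/-- A Q-Res+S refutation. -/
def IsRefutationS (P : QPrefix V) (φ : Cnf V) (D : List (Clause V)) : Prop :=
  (∀ i (hi : i < D.length), StepOKS P φ D i (D[i]'hi)) ∧ D.getLast? = some (∅ : Clause V)

/-- A derivation sequence using rules A, R, U: every line is an input clause or
follows from earlier lines by R or U. -/
def IsDerivation (P : QPrefix V) (φ : Cnf V) (D : List (Clause V)) : Prop :=
  ∀ i (hi : i < D.length), (D[i]'hi) ∈ φ ∨
    (∃ j k, ∃ hj : j < i, ∃ hk : k < i,
      ResStep P (D[j]'(Nat.lt_trans hj hi)) (D[k]'(Nat.lt_trans hk hi)) (D[i]'hi)) ∨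
    (∃ j, ∃ hj : j < i, URed P (D[j]'(Nat.lt_trans hj hi)) (D[i]'hi))

/-! The KBKF formula family (variables indexed 1..n). -/

inductive KV
  | x (i : ℕ)
  | y (i : ℕ)
  | a (i : ℕ)
  | z (i : ℕ)
deriving DecidableEq

/-- Prefix ∃x₁y₁∀a₁ … ∃xₙyₙ∀aₙ ∃z₁…zₙ. -/
def kPrefix (n : ℕ) : QPrefix KV :=
  ((List.range n).flatMap
    (fun j => [(Q.ex, KV.x (j+1)), (Q.ex, KV.y (j+1)), (Q.all, KV.a (j+1))])) ++
  (List.range n).map (fun j => (Q.ex, KV.z (j+1)))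

/-- The tail z̄₁ ∨ … ∨ z̄ₙ. -/
def kZneg (n : ℕ) : Clause KV := (Finset.range n).image (fun j => ((KV.z (j+1), false) : Lit KV))

/-- The clauses of KBKF_n. -/
def kbkf (n : ℕ) : Cnf KV :=
  {({(KV.x 1, false), (KV.y 1, false)} : Clause KV)} ∪
  ((Finset.range (n-1)).image (fun j =>
    ({(KV.x (j+1), true), (KV.a (j+1), false), (KV.x (j+2), false), (KV.y (j+2), false)} : Clause KV))) ∪
  ((Finset.range (n-1)).image (fun j =>
    ({(KV.y (j+1), true), (KV.a (j+1), true), (KV.x (j+2), false), (KV.y (j+2), false)} : Clause KV))) ∪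
  {({(KV.x n, true), (KV.a n, false)} : Clause KV) ∪ kZneg n,
   ({(KV.y n, true), (KV.a n, true)} : Clause KV) ∪ kZneg n} ∪
  ((Finset.range n).image (fun j => ({(KV.a (j+1), true), (KV.z (j+1), true)} : Clause KV))) ∪
  ((Finset.range n).image (fun j => ({(KV.a (j+1), false), (KV.z (j+1), true)} : Clause KV)))

/-- The symmetry σᵢ = (xᵢ yᵢ)(x̄ᵢ ȳᵢ)(aᵢ āᵢ) of KBKF_n. -/
def kSigma (i : ℕ) : Lit KV → Lit KV
  | (KV.x j, b) => if j = i then (KV.y j, b) else (KV.x j, b)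
  | (KV.y j, b) => if j = i then (KV.x j, b) else (KV.y j, b)
  | (KV.a j, b) => if j = i then (KV.a j, !b) else (KV.a j, b)
  | (KV.z j, b) => (KV.z j, b)

/-- The symmetry breaker ψₙ = (x̄₁∨y₁) ∧ … ∧ (x̄ₙ∨yₙ) for KBKF_n. -/
def kPsi (n : ℕ) : Cnf KV :=
  (Finset.range n).image (fun j => ({(KV.x (j+1), false), (KV.y (j+1), true)} : Clause KV))

/-! The QUPARITY formula family. -/

inductive PV
  | x (i : ℕ)
  | a (i : ℕ)
  | y (i : ℕ)
deriving DecidableEq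

/-- Prefix ∃x₁…xₙ ∀a₁a₂ ∃y₂…yₙ. -/
def pPrefix (n : ℕ) : QPrefix PV :=
  (List.range n).map (fun j => ((Q.ex, PV.x (j+1)) : Q × PV)) ++
  [(Q.all, PV.a 1), (Q.all, PV.a 2)] ++
  (List.range (n-1)).map (fun k => ((Q.ex, PV.y (k+2)) : Q × PV))

/-- a₁ ∨ a₂ with sign `s` (s = true: unprimed clauses, s = false: primed clauses). -/
def pAA (s : Bool) : Clause PV := {(PV.a 1, s), (PV.a 2, s)}

/-- The clauses of QUPARITY_n. -/
def quparity (n : ℕ) : Cnf PV :=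
  ((Finset.univ : Finset Bool).biUnion (fun s =>
    ({({(PV.x 1, false), (PV.x 2, false), (PV.y 2, false)} : Clause PV) ∪ pAA s,
      ({(PV.x 1, false), (PV.x 2, true), (PV.y 2, true)} : Clause PV) ∪ pAA s,
      ({(PV.x 1, true), (PV.x 2, false), (PV.y 2, true)} : Clause PV) ∪ pAA s,
      ({(PV.x 1, true), (PV.x 2, true), (PV.y 2, false)} : Clause PV) ∪ pAA s} : Cnf PV) ∪
    ((Finset.range (n-2)).biUnion (fun k =>
      ({({(PV.y (k+2), false), (PV.x (k+3), false), (PV.y (k+3), false)} : Clause PV) ∪ pAA s,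
        ({(PV.y (k+2), false), (PV.x (k+3), true), (PV.y (k+3), true)} : Clause PV) ∪ pAA s,
        ({(PV.y (k+2), true), (PV.x (k+3), false), (PV.y (k+3), true)} : Clause PV) ∪ pAA s,
        ({(PV.y (k+2), true), (PV.x (k+3), true), (PV.y (k+3), false)} : Clause PV) ∪ pAA s} : Cnf PV))))) ∪
  {({(PV.a 1, true), (PV.a 2, true), (PV.y n, true)} : Clause PV),
   ({(PV.a 1, false), (PV.a 2, false), (PV.y n, false)} : Clause PV)}

/-- The symmetry σ₁ = (x₁ x₂)(x̄₁ x̄₂) of QUPARITY_n. -/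
def pSigma1 : Lit PV → Lit PV
  | (PV.x 1, b) => (PV.x 2, b)
  | (PV.x 2, b) => (PV.x 1, b)
  | l => l

/-- The symmetry σᵢ = (xᵢ x̄ᵢ)(a₁ ā₁)(a₂ ā₂)(yᵢ ȳᵢ)⋯(yₙ ȳₙ) of QUPARITY_n, 2 ≤ i ≤ n. -/
def pSigma (n i : ℕ) : Lit PV → Lit PV
  | (PV.x j, b) => if j = i then (PV.x j, !b) else (PV.x j, b)
  | (PV.a j, b) => if j = 1 ∨ j = 2 then (PV.a j, !b) else (PV.a j, b)
  | (PV.y j, b) => if i ≤ j ∧ j ≤ n then (PV.y j, !b) else (PV.y j, b)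

/-- The symmetry breaker ψₙ = (x̄₁ ∨ x₂) ∧ x̄₂ ∧ … ∧ x̄ₙ for QUPARITY_n. -/
def pPsi (n : ℕ) : Cnf PV :=
  {({(PV.x 1, false), (PV.x 2, true)} : Clause PV)} ∪
  (Finset.range (n-1)).image (fun k => ({(PV.x (k+2), false)} : Clause PV))

/-! The modified family KBKF'_n with blocking universal variables b_j. -/

inductive KV2
  | x (i : ℕ)
  | b (i : ℕ)
  | y (i : ℕ)
  | a (i : ℕ)
  | z (i : ℕ)
deriving DecidableEq

/-- Prefix ∃x₁∀b₁∃y₁∀a₁ … ∃xₙ∀bₙ∃yₙ∀aₙ ∃z₁…zₙ of KBKF'_n. -/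
def k2Prefix (n : ℕ) : QPrefix KV2 :=
  ((List.range n).flatMap
    (fun j => [(Q.ex, KV2.x (j+1)), (Q.all, KV2.b (j+1)),
               (Q.ex, KV2.y (j+1)), (Q.all, KV2.a (j+1))])) ++
  (List.range n).map (fun j => (Q.ex, KV2.z (j+1)))

/-- The map σᵢ = (xᵢ yᵢ)(x̄ᵢ ȳᵢ)(aᵢ āᵢ) on the literals of KBKF'_n. -/
def k2Sigma (i : ℕ) : Lit KV2 → Lit KV2
  | (KV2.x j, c) => if j = i then (KV2.y j, c) else (KV2.x j, c)
  | (KV2.y j, c) => if j = i then (KV2.x j, c) else (KV2.y j, c)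
  | (KV2.a j, c) => if j = i then (KV2.a j, !c) else (KV2.a j, c)
  | (KV2.b j, c) => (KV2.b j, c)
  | (KV2.z j, c) => (KV2.z j, c)

lemma pSigma_x' (n i j : ℕ) (b : Bool) :
    pSigma n i (PV.x j, b) = if j = i then (PV.x j, !b) else (PV.x j, b) := rfl
lemma pSigma_a' (n i j : ℕ) (b : Bool) :
    pSigma n i (PV.a j, b) = if j = 1 ∨ j = 2 then (PV.a j, !b) else (PV.a j, b) := rfl
lemma pSigma_y' (n i j : ℕ) (b : Bool) :
    pSigma n i (PV.y j, b) = if i ≤ j ∧ j ≤ n then (PV.y j, !b) else (PV.y j, b) := rfl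

lemma pSigma_invol (n i : ℕ) : Function.Involutive (pSigma n i) := by
  rintro ⟨v, b⟩
  cases v <;> simp only [pSigma_x', pSigma_a', pSigma_y'] <;> split <;>
    simp_all [pSigma_x', pSigma_a', pSigma_y']

lemma pSigma_fst (n i : ℕ) (l : Lit PV) : (pSigma n i l).1 = l.1 := by
  rcases l with ⟨v, b⟩
  cases v <;> simp only [pSigma_x', pSigma_a', pSigma_y'] <;> split <;> rfl

lemma pSigma_neg (n i : ℕ) (l : Lit PV) :
    pSigma n i (negLit l) = negLit (pSigma n i l) := by
  rcases l with ⟨v, b⟩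
  cases v <;> simp only [negLit, pSigma_x', pSigma_a', pSigma_y'] <;> split <;> rfl

lemma pAA_image (n i : ℕ) (s : Bool) :
    (pAA s).image (pSigma n i) = pAA (!s) := by
  simp [pAA, Finset.image_insert, pSigma_a']

lemma g1_mem (n : ℕ) (s b1 b2 b3 : Bool) (h : b3 = xor b1 b2) :
    (({(PV.x 1, b1), (PV.x 2, b2), (PV.y 2, b3)} : Clause PV) ∪ pAA s) ∈ quparity n := by
  subst h
  apply Finset.mem_union_left
  rw [Finset.mem_biUnion]
  refine ⟨s, Finset.mem_univ _, Finset.mem_union_left _ ?_⟩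
  cases b1 <;> cases b2 <;> simp

lemma g2_mem (n k : ℕ) (hk : k < n - 2) (s b1 b2 b3 : Bool) (h : b3 = xor b1 b2) :
    (({(PV.y (k+2), b1), (PV.x (k+3), b2), (PV.y (k+3), b3)} : Clause PV) ∪ pAA s) ∈ quparity n := by
  subst h
  apply Finset.mem_union_left
  rw [Finset.mem_biUnion]
  refine ⟨s, Finset.mem_univ _, Finset.mem_union_right _ ?_⟩
  rw [Finset.mem_biUnion]
  refine ⟨k, Finset.mem_range.mpr hk, ?_⟩
  cases b1 <;> cases b2 <;> simp

lemma e_mem (n : ℕ) (b : Bool) :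
    ({(PV.a 1, b), (PV.a 2, b), (PV.y n, b)} : Clause PV) ∈ quparity n := by
  apply Finset.mem_union_right
  cases b <;> simp

/-- each σᵢ (2 ≤ i ≤ n) is a symmetry of QUPARITY_n. -/
theorem pSigma_isSymmetry : ∀ n i : ℕ, 2 ≤ n → 2 ≤ i → i ≤ n →
    IsSymmetry (pPrefix n) (quparity n) (pSigma n i) := by
  intro n i hn hi2 hin
  constructor
  · refine ⟨(pSigma_invol n i).bijective, pSigma_neg n i, ?_⟩
    intro v w b c h hvw
    have hf := pSigma_fst n i (v, b)
    rw [h] at hf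
    exact absurd hf.symm hvw
  · have hinj : Function.Injective (pSigma n i) := (pSigma_invol n i).injective
    have hsub : (quparity n).image (mapClause (pSigma n i)) ⊆ quparity n := by
      rw [Finset.image_subset_iff]
      intro C hC
      simp only [quparity, Finset.mem_union, Finset.mem_biUnion, Finset.mem_univ, true_and,
        Finset.mem_insert, Finset.mem_singleton, Finset.mem_range] at hC
      rcases hC with (⟨s, (h|h|h|h) | ⟨k, hk, (h|h|h|h)⟩⟩ | h | h) <;> subst h
      · by_cases hI : i = 2
        · subst hI
          rw [show mapClause (pSigma n 2) (({(PV.x 1, false), (PV.x 2, false), (PV.y 2, false)} : Clause PV) ∪ pAA s) = (({(PV.x 1, false), (PV.x 2, true), (PV.y 2, true)} : Clause PV) ∪ pAA (!s)) from by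
            simp [mapClause, Finset.image_union, pAA_image, pSigma_x', pSigma_y', hn]]
          exact g1_mem n (!s) false true true (by decide)
        · rw [show mapClause (pSigma n i) (({(PV.x 1, false), (PV.x 2, false), (PV.y 2, false)} : Clause PV) ∪ pAA s) = (({(PV.x 1, false), (PV.x 2, false), (PV.y 2, false)} : Clause PV) ∪ pAA (!s)) from by
            simp [mapClause, Finset.image_union, pAA_image, pSigma_x', pSigma_y',
              (show ¬((1:ℕ) = i) by omega), (show ¬((2:ℕ) = i) by omega),
              (show ¬(i ≤ 2) by omega)]]
          exact g1_mem n (!s) false false false (by decide)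
      · by_cases hI : i = 2
        · subst hI
          rw [show mapClause (pSigma n 2) (({(PV.x 1, false), (PV.x 2, true), (PV.y 2, true)} : Clause PV) ∪ pAA s) = (({(PV.x 1, false), (PV.x 2, false), (PV.y 2, false)} : Clause PV) ∪ pAA (!s)) from by
            simp [mapClause, Finset.image_union, pAA_image, pSigma_x', pSigma_y', hn]]
          exact g1_mem n (!s) false false false (by decide)
        · rw [show mapClause (pSigma n i) (({(PV.x 1, false), (PV.x 2, true), (PV.y 2, true)} : Clause PV) ∪ pAA s) = (({(PV.x 1, false), (PV.x 2, true), (PV.y 2, true)} : Clause PV) ∪ pAA (!s)) from by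
            simp [mapClause, Finset.image_union, pAA_image, pSigma_x', pSigma_y',
              (show ¬((1:ℕ) = i) by omega), (show ¬((2:ℕ) = i) by omega),
              (show ¬(i ≤ 2) by omega)]]
          exact g1_mem n (!s) false true true (by decide)
      · by_cases hI : i = 2
        · subst hI
          rw [show mapClause (pSigma n 2) (({(PV.x 1, true), (PV.x 2, false), (PV.y 2, true)} : Clause PV) ∪ pAA s) = (({(PV.x 1, true), (PV.x 2, true), (PV.y 2, false)} : Clause PV) ∪ pAA (!s)) from by
            simp [mapClause, Finset.image_union, pAA_image, pSigma_x', pSigma_y', hn]]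
          exact g1_mem n (!s) true true false (by decide)
        · rw [show mapClause (pSigma n i) (({(PV.x 1, true), (PV.x 2, false), (PV.y 2, true)} : Clause PV) ∪ pAA s) = (({(PV.x 1, true), (PV.x 2, false), (PV.y 2, true)} : Clause PV) ∪ pAA (!s)) from by
            simp [mapClause, Finset.image_union, pAA_image, pSigma_x', pSigma_y',
              (show ¬((1:ℕ) = i) by omega), (show ¬((2:ℕ) = i) by omega),
              (show ¬(i ≤ 2) by omega)]]
          exact g1_mem n (!s) true false true (by decide)
      · by_cases hI : i = 2
        · subst hI
          rw [show mapClause (pSigma n 2) (({(PV.x 1, true), (PV.x 2, true), (PV.y 2, false)} : Clause PV) ∪ pAA s) = (({(PV.x 1, true), (PV.x 2, false), (PV.y 2, true)} : Clause PV) ∪ pAA (!s)) from by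
            simp [mapClause, Finset.image_union, pAA_image, pSigma_x', pSigma_y', hn]]
          exact g1_mem n (!s) true false true (by decide)
        · rw [show mapClause (pSigma n i) (({(PV.x 1, true), (PV.x 2, true), (PV.y 2, false)} : Clause PV) ∪ pAA s) = (({(PV.x 1, true), (PV.x 2, true), (PV.y 2, false)} : Clause PV) ∪ pAA (!s)) from by
            simp [mapClause, Finset.image_union, pAA_image, pSigma_x', pSigma_y',
              (show ¬((1:ℕ) = i) by omega), (show ¬((2:ℕ) = i) by omega),
              (show ¬(i ≤ 2) by omega)]]
          exact g1_mem n (!s) true true false (by decide)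
      · rcases le_or_gt i (k+2) with hca | hca
        · rw [show mapClause (pSigma n i) (({(PV.y (k+2), false), (PV.x (k+3), false), (PV.y (k+3), false)} : Clause PV) ∪ pAA s) = (({(PV.y (k+2), true), (PV.x (k+3), false), (PV.y (k+3), true)} : Clause PV) ∪ pAA (!s)) from by
            simp [mapClause, Finset.image_union, pAA_image, pSigma_x', pSigma_y', hca,
              (show k+2 ≤ n by omega), (show ¬(k+3 = i) by omega),
              (show i ≤ k+3 by omega), (show k+3 ≤ n by omega)]]
          exact g2_mem n k hk (!s) true false true (by decide)
        · by_cases hcb : i = k+3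
          · rw [show mapClause (pSigma n i) (({(PV.y (k+2), false), (PV.x (k+3), false), (PV.y (k+3), false)} : Clause PV) ∪ pAA s) = (({(PV.y (k+2), false), (PV.x (k+3), true), (PV.y (k+3), true)} : Clause PV) ∪ pAA (!s)) from by
              simp [mapClause, Finset.image_union, pAA_image, pSigma_x', pSigma_y', hcb,
                (show ¬(k+3 ≤ k+2) by omega), (show k+3 ≤ n by omega)]]
            exact g2_mem n k hk (!s) false true true (by decide)
          · rw [show mapClause (pSigma n i) (({(PV.y (k+2), false), (PV.x (k+3), false), (PV.y (k+3), false)} : Clause PV) ∪ pAA s) = (({(PV.y (k+2), false), (PV.x (k+3), false), (PV.y (k+3), false)} : Clause PV) ∪ pAA (!s)) from by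
              simp [mapClause, Finset.image_union, pAA_image, pSigma_x', pSigma_y',
                (show ¬(i ≤ k+2) by omega), (show ¬(k+3 = i) by omega),
                (show ¬(i ≤ k+3) by omega)]]
            exact g2_mem n k hk (!s) false false false (by decide)
      · rcases le_or_gt i (k+2) with hca | hca
        · rw [show mapClause (pSigma n i) (({(PV.y (k+2), false), (PV.x (k+3), true), (PV.y (k+3), true)} : Clause PV) ∪ pAA s) = (({(PV.y (k+2), true), (PV.x (k+3), true), (PV.y (k+3), false)} : Clause PV) ∪ pAA (!s)) from by
            simp [mapClause, Finset.image_union, pAA_image, pSigma_x', pSigma_y', hca,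
              (show k+2 ≤ n by omega), (show ¬(k+3 = i) by omega),
              (show i ≤ k+3 by omega), (show k+3 ≤ n by omega)]]
          exact g2_mem n k hk (!s) true true false (by decide)
        · by_cases hcb : i = k+3
          · rw [show mapClause (pSigma n i) (({(PV.y (k+2), false), (PV.x (k+3), true), (PV.y (k+3), true)} : Clause PV) ∪ pAA s) = (({(PV.y (k+2), false), (PV.x (k+3), false), (PV.y (k+3), false)} : Clause PV) ∪ pAA (!s)) from by
              simp [mapClause, Finset.image_union, pAA_image, pSigma_x', pSigma_y', hcb,
                (show ¬(k+3 ≤ k+2) by omega), (show k+3 ≤ n by omega)]]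
            exact g2_mem n k hk (!s) false false false (by decide)
          · rw [show mapClause (pSigma n i) (({(PV.y (k+2), false), (PV.x (k+3), true), (PV.y (k+3), true)} : Clause PV) ∪ pAA s) = (({(PV.y (k+2), false), (PV.x (k+3), true), (PV.y (k+3), true)} : Clause PV) ∪ pAA (!s)) from by
              simp [mapClause, Finset.image_union, pAA_image, pSigma_x', pSigma_y',
                (show ¬(i ≤ k+2) by omega), (show ¬(k+3 = i) by omega),
                (show ¬(i ≤ k+3) by omega)]]
            exact g2_mem n k hk (!s) false true true (by decide)
      · rcases le_or_gt i (k+2) with hca | hca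
        · rw [show mapClause (pSigma n i) (({(PV.y (k+2), true), (PV.x (k+3), false), (PV.y (k+3), true)} : Clause PV) ∪ pAA s) = (({(PV.y (k+2), false), (PV.x (k+3), false), (PV.y (k+3), false)} : Clause PV) ∪ pAA (!s)) from by
            simp [mapClause, Finset.image_union, pAA_image, pSigma_x', pSigma_y', hca,
              (show k+2 ≤ n by omega), (show ¬(k+3 = i) by omega),
              (show i ≤ k+3 by omega), (show k+3 ≤ n by omega)]]
          exact g2_mem n k hk (!s) false false false (by decide)
        · by_cases hcb : i = k+3
          · rw [show mapClause (pSigma n i) (({(PV.y (k+2), true), (PV.x (k+3), false), (PV.y (k+3), true)} : Clause PV) ∪ pAA s) = (({(PV.y (k+2), true), (PV.x (k+3), true), (PV.y (k+3), false)} : Clause PV) ∪ pAA (!s)) from by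
              simp [mapClause, Finset.image_union, pAA_image, pSigma_x', pSigma_y', hcb,
                (show ¬(k+3 ≤ k+2) by omega), (show k+3 ≤ n by omega)]]
            exact g2_mem n k hk (!s) true true false (by decide)
          · rw [show mapClause (pSigma n i) (({(PV.y (k+2), true), (PV.x (k+3), false), (PV.y (k+3), true)} : Clause PV) ∪ pAA s) = (({(PV.y (k+2), true), (PV.x (k+3), false), (PV.y (k+3), true)} : Clause PV) ∪ pAA (!s)) from by
              simp [mapClause, Finset.image_union, pAA_image, pSigma_x', pSigma_y',
                (show ¬(i ≤ k+2) by omega), (show ¬(k+3 = i) by omega),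
                (show ¬(i ≤ k+3) by omega)]]
            exact g2_mem n k hk (!s) true false true (by decide)
      · rcases le_or_gt i (k+2) with hca | hca
        · rw [show mapClause (pSigma n i) (({(PV.y (k+2), true), (PV.x (k+3), true), (PV.y (k+3), false)} : Clause PV) ∪ pAA s) = (({(PV.y (k+2), false), (PV.x (k+3), true), (PV.y (k+3), true)} : Clause PV) ∪ pAA (!s)) from by
            simp [mapClause, Finset.image_union, pAA_image, pSigma_x', pSigma_y', hca,
              (show k+2 ≤ n by omega), (show ¬(k+3 = i) by omega),
              (show i ≤ k+3 by omega), (show k+3 ≤ n by omega)]]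
          exact g2_mem n k hk (!s) false true true (by decide)
        · by_cases hcb : i = k+3
          · rw [show mapClause (pSigma n i) (({(PV.y (k+2), true), (PV.x (k+3), true), (PV.y (k+3), false)} : Clause PV) ∪ pAA s) = (({(PV.y (k+2), true), (PV.x (k+3), false), (PV.y (k+3), true)} : Clause PV) ∪ pAA (!s)) from by
              simp [mapClause, Finset.image_union, pAA_image, pSigma_x', pSigma_y', hcb,
                (show ¬(k+3 ≤ k+2) by omega), (show k+3 ≤ n by omega)]]
            exact g2_mem n k hk (!s) true false true (by decide)
          · rw [show mapClause (pSigma n i) (({(PV.y (k+2), true), (PV.x (k+3), true), (PV.y (k+3), false)} : Clause PV) ∪ pAA s) = (({(PV.y (k+2), true), (PV.x (k+3), true), (PV.y (k+3), false)} : Clause PV) ∪ pAA (!s)) from by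
              simp [mapClause, Finset.image_union, pAA_image, pSigma_x', pSigma_y',
                (show ¬(i ≤ k+2) by omega), (show ¬(k+3 = i) by omega),
                (show ¬(i ≤ k+3) by omega)]]
            exact g2_mem n k hk (!s) true true false (by decide)
      · rw [show mapClause (pSigma n i) ({(PV.a 1, true), (PV.a 2, true), (PV.y n, true)} : Clause PV)
            = ({(PV.a 1, false), (PV.a 2, false), (PV.y n, false)} : Clause PV) from by
          simp [mapClause, pSigma_a', pSigma_y', hin]]
        exact e_mem n false
      · rw [show mapClause (pSigma n i) ({(PV.a 1, false), (PV.a 2, false), (PV.y n, false)} : Clause PV)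
            = ({(PV.a 1, true), (PV.a 2, true), (PV.y n, true)} : Clause PV) from by
          simp [mapClause, pSigma_a', pSigma_y', hin]]
        exact e_mem n true
    apply Finset.eq_of_subset_of_card_le hsub
    rw [Finset.card_image_of_injective _
      (fun C D hCD => Finset.image_injective hinj (by simpa [mapClause] using hCD))]
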